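/- Let k and t be natural numbers with β(k) ≥ 1, where β(k) denotes the number of maximal blocks of consecutive 1's in the binary representation of k. Then s(k + 2^t) ≥ β(k), where s(k) denotes the total number of 1's in the binary representation of k. -/

import Mathlib

/-- `oneBlocks k` is the number of maximal blocks of consecutive 1's in the binary
representation of `k`: equivalently, the number of positions `i` where the `i`-th binary
digit of `k` is 1 and the `(i+1)`-th binary digit is 0. -/
noncomputable def oneBlocks (k : ℕ) : ℕ :=
  {i : ℕ | k.testBit i = true ∧ k.testBit (i + 1) = false}.ncard

/-- `onesCount k` is the total number of 1's in the binary representation of `k`. -/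
noncomputable def onesCount (k : ℕ) : ℕ :=
  {i : ℕ | k.testBit i = true}.ncard

private lemma ones_finite (k : ℕ) : {i : ℕ | k.testBit i = true}.Finite := by
  apply (Set.finite_Iic k).subset
  intro i hi
  simp only [Set.mem_setOf_eq] at hi
  by_contra h
  simp only [Set.mem_Iic, not_le] at h
  have : k < 2 ^ i := lt_of_le_of_lt (Nat.le_of_lt_succ (Nat.lt_succ_of_lt h))
    (Nat.lt_two_pow_self (n := i)) |>.trans_le (le_refl _)
  rw [Nat.testBit_lt_two_pow this] at hi
  exact Bool.false_ne_true hi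

private lemma blocks_subset (k : ℕ) :
    {i : ℕ | k.testBit i = true ∧ k.testBit (i + 1) = false} ⊆
      {i : ℕ | k.testBit i = true} := fun _ h => h.1

private lemma blocks_finite (k : ℕ) :
    {i : ℕ | k.testBit i = true ∧ k.testBit (i + 1) = false}.Finite :=
  (ones_finite k).subset (blocks_subset k)

private lemma oneBlocks_le_onesCount (k : ℕ) : oneBlocks k ≤ onesCount k :=
  Set.ncard_le_ncard (blocks_subset k) (ones_finite k)

private lemma testBit_db (m b i : ℕ) (hb : b < 2) :
    (2 * m + b).testBit (i + 1) = m.testBit i := by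
  rw [Nat.testBit_succ]
  congr 1
  omega

private lemma testBit_db0 (m b : ℕ) (hb : b < 2) :
    (2 * m + b).testBit 0 = decide (b = 1) := by
  rw [Nat.testBit_zero]
  congr 1
  simp only [eq_iff_iff]
  omega

private lemma onesCount_two_mul (m : ℕ) : onesCount (2 * m) = onesCount m := by
  unfold onesCount
  have : {i : ℕ | (2 * m).testBit i = true} = (· + 1) '' {i : ℕ | m.testBit i = true} := by
    ext i
    cases i with
    | zero =>
      simp only [Set.mem_setOf_eq, Set.mem_image]
      constructor
      · intro h
        rw [show 2 * m = 2 * m + 0 by ring, testBit_db0 m 0 (by omega)] at h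
        simp at h
      · rintro ⟨j, _, hj⟩; omega
    | succ i =>
      simp only [Set.mem_setOf_eq, Set.mem_image]
      rw [show 2 * m = 2 * m + 0 by ring, testBit_db m 0 i (by omega)]
      constructor
      · intro h; exact ⟨i, h, rfl⟩
      · rintro ⟨j, hj, hji⟩
        have : j = i := by omega
        subst this; exact hj
  rw [this, Set.ncard_image_of_injective _ (add_left_injective 1)]

private lemma ones_two_mul_succ (m : ℕ) :
    {i : ℕ | (2 * m + 1).testBit i = true} =
      insert 0 ((· + 1) '' {i : ℕ | m.testBit i = true}) := by
  ext i
  cases i with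
  | zero =>
    simp only [Set.mem_setOf_eq, Set.mem_insert_iff]
    rw [testBit_db0 m 1 (by omega)]
    simp
  | succ i =>
    simp only [Set.mem_setOf_eq, Set.mem_insert_iff, Set.mem_image]
    rw [testBit_db m 1 i (by omega)]
    constructor
    · intro h; exact Or.inr ⟨i, h, rfl⟩
    · rintro (h | ⟨j, hj, hji⟩)
      · omega
      · have : j = i := by omega
        subst this; exact hj

private lemma onesCount_two_mul_succ (m : ℕ) : onesCount (2 * m + 1) = onesCount m + 1 := by
  unfold onesCount
  rw [ones_two_mul_succ]
  rw [Set.ncard_insert_of_notMem (by rintro ⟨j, -, hj⟩; simp at hj)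
    (((ones_finite m).image _))]
  rw [Set.ncard_image_of_injective _ (add_left_injective 1)]

private lemma oneBlocks_two_mul (m : ℕ) : oneBlocks (2 * m) = oneBlocks m := by
  unfold oneBlocks
  have : {i : ℕ | (2 * m).testBit i = true ∧ (2 * m).testBit (i + 1) = false} =
      (· + 1) '' {i : ℕ | m.testBit i = true ∧ m.testBit (i + 1) = false} := by
    ext i
    cases i with
    | zero =>
      simp only [Set.mem_setOf_eq, Set.mem_image]
      constructor
      · rintro ⟨h, -⟩
        rw [show 2 * m = 2 * m + 0 by ring, testBit_db0 m 0 (by omega)] at h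
        exact absurd h (by simp)
      · rintro ⟨j, _, hj⟩; omega
    | succ i =>
      simp only [Set.mem_setOf_eq, Set.mem_image]
      rw [show 2 * m = 2 * m + 0 by ring, testBit_db m 0 i (by omega),
        testBit_db m 0 (i + 1) (by omega)]
      constructor
      · intro h; exact ⟨i, h, rfl⟩
      · rintro ⟨j, hj, hji⟩
        have : j = i := by omega
        subst this; exact hj
  rw [this, Set.ncard_image_of_injective _ (add_left_injective 1)]

private lemma blocks_two_mul_succ_shift (m : ℕ) (i : ℕ) :
    ((2 * m + 1).testBit (i + 1) = true ∧ (2 * m + 1).testBit (i + 2) = false) ↔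
      (m.testBit i = true ∧ m.testBit (i + 1) = false) := by
  rw [testBit_db m 1 i (by omega), testBit_db m 1 (i + 1) (by omega)]

private lemma oneBlocks_two_mul_succ_even (m : ℕ) (hm : m % 2 = 0) :
    oneBlocks (2 * m + 1) = oneBlocks m + 1 := by
  unfold oneBlocks
  have : {i : ℕ | (2 * m + 1).testBit i = true ∧ (2 * m + 1).testBit (i + 1) = false} =
      insert 0 ((· + 1) '' {i : ℕ | m.testBit i = true ∧ m.testBit (i + 1) = false}) := by
    ext i
    cases i with
    | zero =>
      simp only [Set.mem_setOf_eq, Set.mem_insert_iff]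
      rw [testBit_db0 m 1 (by omega), testBit_db m 1 0 (by omega), Nat.testBit_zero]
      simp [hm]
    | succ i =>
      simp only [Set.mem_setOf_eq, Set.mem_insert_iff, Set.mem_image]
      rw [show i + 1 + 1 = i + 2 by rfl, blocks_two_mul_succ_shift]
      constructor
      · intro h; exact Or.inr ⟨i, h, rfl⟩
      · rintro (h | ⟨j, hj, hji⟩)
        · omega
        · have : j = i := by omega
          subst this; exact hj
  rw [this, Set.ncard_insert_of_notMem (by rintro ⟨j, -, hj⟩; simp at hj)
    (((blocks_finite m).image _)),
    Set.ncard_image_of_injective _ (add_left_injective 1)]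

private lemma oneBlocks_two_mul_succ_odd (m : ℕ) (hm : m % 2 = 1) :
    oneBlocks (2 * m + 1) = oneBlocks m := by
  unfold oneBlocks
  have : {i : ℕ | (2 * m + 1).testBit i = true ∧ (2 * m + 1).testBit (i + 1) = false} =
      (· + 1) '' {i : ℕ | m.testBit i = true ∧ m.testBit (i + 1) = false} := by
    ext i
    cases i with
    | zero =>
      simp only [Set.mem_setOf_eq, Set.mem_image]
      constructor
      · rintro ⟨-, h⟩
        rw [testBit_db m 1 0 (by omega), Nat.testBit_zero] at h
        simp [hm] at h
      · rintro ⟨j, _, hj⟩; omega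
    | succ i =>
      simp only [Set.mem_setOf_eq, Set.mem_image]
      rw [show i + 1 + 1 = i + 2 by rfl, blocks_two_mul_succ_shift]
      constructor
      · intro h; exact ⟨i, h, rfl⟩
      · rintro ⟨j, hj, hji⟩
        have : j = i := by omega
        subst this; exact hj
  rw [this, Set.ncard_image_of_injective _ (add_left_injective 1)]

private lemma main_aux : ∀ k t : ℕ, oneBlocks k ≤ onesCount (k + 2 ^ t) := by
  intro k
  induction k using Nat.strong_induction_on with
  | _ k IH =>
    intro t
    rcases Nat.eq_zero_or_pos k with hk0 | hkpos
    · subst hk0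
      have : oneBlocks 0 = 0 := by
        unfold oneBlocks
        convert Set.ncard_empty ℕ using 2
        ext i; simp [Nat.zero_testBit]
      simp [this]
    set m := k / 2 with hm
    set b := k % 2 with hb
    have hkeq : k = 2 * m + b := by omega
    have hb2 : b = 0 ∨ b = 1 := by omega
    cases t with
    | zero =>
      rcases hb2 with hb0 | hb1
      · -- k even, k + 1 = 2m + 1
        have h1 : k + 2 ^ 0 = 2 * m + 1 := by omega
        rw [h1, onesCount_two_mul_succ, hkeq, hb0, add_zero, oneBlocks_two_mul]
        exact le_trans (oneBlocks_le_onesCount m) (Nat.le_succ _)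
      · -- k odd, k + 1 = 2(m+1)
        have h1 : k + 2 ^ 0 = 2 * (m + 1) := by omega
        rw [h1, onesCount_two_mul, hkeq, hb1]
        rcases Nat.even_or_odd m with hme | hmo
        · -- m even: m + 1 = 2*(m/2)+1
          have hme' : m % 2 = 0 := Nat.even_iff.mp hme
          rw [oneBlocks_two_mul_succ_even m hme']
          have h2 : m + 1 = 2 * (m / 2) + 1 := by omega
          have h3 : m = 2 * (m / 2) := by omega
          rw [h2, onesCount_two_mul_succ]
          have h4 := oneBlocks_two_mul (m / 2)
          rw [← h3] at h4
          have hle := oneBlocks_le_onesCount (m / 2)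
          have h5 := onesCount_two_mul (m / 2)
          rw [← h3] at h5
          omega
        · -- m odd: apply IH to m with t = 0
          have hmo' : m % 2 = 1 := Nat.odd_iff.mp hmo
          rw [oneBlocks_two_mul_succ_odd m hmo']
          have hIH := IH m (by omega) 0
          simpa using hIH
    | succ u =>
      rcases hb2 with hb0 | hb1
      · -- k = 2m, k + 2^(u+1) = 2(m + 2^u)
        have h1 : k + 2 ^ (u + 1) = 2 * (m + 2 ^ u) := by rw [pow_succ]; omega
        rw [h1, onesCount_two_mul, hkeq, hb0, add_zero, oneBlocks_two_mul]
        exact IH m (by omega) u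
      · -- k = 2m + 1, k + 2^(u+1) = 2(m + 2^u) + 1
        have h1 : k + 2 ^ (u + 1) = 2 * (m + 2 ^ u) + 1 := by rw [pow_succ]; omega
        rw [h1, onesCount_two_mul_succ, hkeq, hb1]
        have hIH := IH m (by omega) u
        rcases Nat.even_or_odd m with hme | hmo
        · rw [oneBlocks_two_mul_succ_even m (Nat.even_iff.mp hme)]
          omega
        · rw [oneBlocks_two_mul_succ_odd m (Nat.odd_iff.mp hmo)]
          omega

/-- If `k` has at least one 1-block, then the number of 1's in the binary representation of
`k + 2^t` is at least the number of maximal 1-blocks of `k`: `s(k + 2^t) ≥ β(k)`. -/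
theorem onesCount_add_two_pow_ge_oneBlocks
    (k t : ℕ) (hk : 1 ≤ oneBlocks k) :
    oneBlocks k ≤ onesCount (k + 2 ^ t) := by
  exact main_aux k t
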